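/- Let y₁, y₂, y₃ be real numbers with y₂ ≤ 0 ≤ y₁ ≤ y₃ and y₂ < y₃. Set r = √(y₃ − y₂) and k = √((y₃ − y₁)/(y₃ − y₂)), and assume k ∈ (0,1). Let K = ∫₀^{π/2} (1 − k² sin²x)^{−1/2} dx and E = ∫₀^{π/2} (1 − k² sin²x)^{1/2} dx. Let s : ℝ → ℝ be differentiable with s(0) = 0, s(K) = 1, s(2K − t) = s(t) for all t ∈ ℝ, and s′(t) = √((1 − s(t)²)(1 − k² s(t)²)) for all t ∈ [0,K]. Then ∫₀^{2K/r} ( y₃ − (y₃ − y₁)·s(rt)² ) dt = 2( y₂·K/r + r·E ). -/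

import Mathlib

open Real

/-- the integral of the conformal factor over one period equals
`2(y₂K/r + rE)`. -/
theorem stmt_3 (y₁ y₂ y₃ : ℝ) (hy : y₂ ≤ 0 ∧ 0 ≤ y₁ ∧ y₁ ≤ y₃) (hy23 : y₂ < y₃)
    (r k : ℝ) (hr : r = Real.sqrt (y₃ - y₂)) (hkdef : k = Real.sqrt ((y₃ - y₁) / (y₃ - y₂)))
    (hk : k ∈ Set.Ioo (0 : ℝ) 1) (K E : ℝ)
    (hK : K = ∫ x in (0 : ℝ)..(π / 2), (Real.sqrt (1 - k ^ 2 * Real.sin x ^ 2))⁻¹)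
    (hE : E = ∫ x in (0 : ℝ)..(π / 2), Real.sqrt (1 - k ^ 2 * Real.sin x ^ 2))
    (s : ℝ → ℝ) (hs0 : s 0 = 0) (hsK : s K = 1)
    (hsym : ∀ t : ℝ, s (2 * K - t) = s t)
    (hs : ∀ t ∈ Set.Icc (0 : ℝ) K,
      HasDerivAt s (Real.sqrt ((1 - (s t) ^ 2) * (1 - k ^ 2 * (s t) ^ 2))) t) :
    ∫ t in (0 : ℝ)..(2 * K / r), (y₃ - (y₃ - y₁) * (s (r * t)) ^ 2) =
      2 * (y₂ * K / r + r * E) := by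
  obtain ⟨hy2, hy01, hy13⟩ := hy
  obtain ⟨hk0, hk1⟩ := hk
  have hk2lt : k ^ 2 < 1 := by nlinarith
  -- positivity of 1 - k² u² whenever u² ≤ 1
  have hpos : ∀ u : ℝ, u ^ 2 ≤ 1 → 0 < 1 - k ^ 2 * u ^ 2 := by
    intro u hu
    nlinarith [sq_nonneg u, sq_nonneg k]
  have hpossin : ∀ x : ℝ, 0 < 1 - k ^ 2 * Real.sin x ^ 2 := fun x =>
    hpos _ (Real.sin_sq_le_one x)
  -- continuity of the elliptic integrands
  have hbase : Continuous fun x => Real.sqrt (1 - k ^ 2 * Real.sin x ^ 2) :=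
    Real.continuous_sqrt.comp
      (continuous_const.sub (continuous_const.mul ((Real.continuous_sin).pow 2)))
  have hbase_ne : ∀ x : ℝ, Real.sqrt (1 - k ^ 2 * Real.sin x ^ 2) ≠ 0 := fun x =>
    ne_of_gt (Real.sqrt_pos.mpr (hpossin x))
  have hg1cont : Continuous fun x => (Real.sqrt (1 - k ^ 2 * Real.sin x ^ 2))⁻¹ :=
    hbase.inv₀ hbase_ne
  -- K ≥ π/2 > 0
  have hK0 : 0 < K := by
    have hle : ∀ x ∈ Set.Icc (0 : ℝ) (π / 2),
        (1 : ℝ) ≤ (Real.sqrt (1 - k ^ 2 * Real.sin x ^ 2))⁻¹ := by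
      intro x _
      have h1 : Real.sqrt (1 - k ^ 2 * Real.sin x ^ 2) ≤ 1 :=
        Real.sqrt_le_one.mpr (by nlinarith [sq_nonneg (Real.sin x), sq_nonneg k])
      have h2 : 0 < Real.sqrt (1 - k ^ 2 * Real.sin x ^ 2) :=
        Real.sqrt_pos.mpr (hpossin x)
      exact (one_le_inv₀ h2).mpr h1
    have hπ : (0:ℝ) ≤ π / 2 := by positivity
    have := intervalIntegral.integral_mono_on (μ := MeasureTheory.volume) hπ intervalIntegrable_const
      (hg1cont.intervalIntegrable 0 (π / 2)) hle
    simp only [intervalIntegral.integral_const, smul_eq_mul, sub_zero, mul_one] at this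
    have hπ2 : (0:ℝ) < π / 2 := by positivity
    rw [hK]; linarith
  have hr0 : 0 < r := by rw [hr]; exact Real.sqrt_pos.mpr (by linarith)
  have hrne : r ≠ 0 := ne_of_gt hr0
  have hr2 : r ^ 2 = y₃ - y₂ := by rw [hr]; exact Real.sq_sqrt (by linarith)
  have hk2 : k ^ 2 * r ^ 2 = y₃ - y₁ := by
    rw [hkdef, hr, Real.sq_sqrt (div_nonneg (by linarith) (by linarith) : (0:ℝ) ≤ (y₃ - y₁) / (y₃ - y₂)),
      Real.sq_sqrt (by linarith : (0:ℝ) ≤ y₃ - y₂)]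
    exact div_mul_cancel₀ _ (by linarith)
  -- s is continuous and monotone on [0, K], with values in [0, 1]
  have scont : ContinuousOn s (Set.Icc 0 K) := fun t ht =>
    (hs t ht).continuousAt.continuousWithinAt
  have smono : MonotoneOn s (Set.Icc 0 K) := by
    apply monotoneOn_of_deriv_nonneg (convex_Icc 0 K) scont
    · intro x hx
      rw [interior_Icc] at hx
      exact ((hs x (Set.mem_Icc_of_Ioo hx)).differentiableAt).differentiableWithinAt
    · intro x hx
      rw [interior_Icc] at hx
      rw [(hs x (Set.mem_Icc_of_Ioo hx)).deriv]
      exact Real.sqrt_nonneg _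
  have sbound : ∀ t ∈ Set.Icc (0:ℝ) K, s t ∈ Set.Icc (0:ℝ) 1 := by
    intro t ht
    constructor
    · rw [← hs0]; exact smono (Set.left_mem_Icc.mpr hK0.le) ht ht.1
    · rw [← hsK]; exact smono ht (Set.right_mem_Icc.mpr hK0.le) ht.2
  -- the first time s hits 1
  set S : Set ℝ := Set.Icc 0 K ∩ s ⁻¹' {1} with hS
  have hSclosed : IsClosed S := scont.preimage_isClosed_of_isClosed isClosed_Icc isClosed_singleton
  have hSne : S.Nonempty := ⟨K, Set.right_mem_Icc.mpr hK0.le, by simp [hsK]⟩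
  have hSbdd : BddBelow S := ⟨0, fun x hx => hx.1.1⟩
  set t₀ : ℝ := sInf S with ht₀
  have ht₀mem : t₀ ∈ S := hSclosed.csInf_mem hSne hSbdd
  have ht₀Icc : t₀ ∈ Set.Icc (0:ℝ) K := ht₀mem.1
  have hst₀ : s t₀ = 1 := ht₀mem.2
  have hslt : ∀ t, 0 ≤ t → t < t₀ → s t < 1 := by
    intro t h0 hlt
    have htK : t ∈ Set.Icc (0:ℝ) K := ⟨h0, hlt.le.trans ht₀Icc.2⟩
    rcases lt_or_eq_of_le (sbound t htK).2 with h | h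
    · exact h
    · exact absurd (csInf_le hSbdd ⟨htK, h⟩) (not_le.mpr hlt)
  -- change of variables via φ = arcsin ∘ s on [0, t₀]
  have hIccsub : Set.Icc (0:ℝ) t₀ ⊆ Set.Icc 0 K := Set.Icc_subset_Icc_right ht₀Icc.2
  have huIcc : Set.uIcc (0:ℝ) t₀ = Set.Icc 0 t₀ := Set.uIcc_of_le ht₀Icc.1
  have subst : ∀ g : ℝ → ℝ, Continuous g →
      (∫ t in (0:ℝ)..t₀, Real.sqrt (1 - k ^ 2 * (s t) ^ 2) * g (Real.arcsin (s t)))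
        = ∫ x in (0:ℝ)..(π / 2), g x := by
    intro g hg
    have hmin : min (0:ℝ) t₀ = 0 := min_eq_left ht₀Icc.1
    have hmax : max (0:ℝ) t₀ = t₀ := max_eq_right ht₀Icc.1
    have hφcont : ContinuousOn (fun t => Real.arcsin (s t)) (Set.uIcc (0:ℝ) t₀) := by
      rw [huIcc]
      exact Real.continuous_arcsin.comp_continuousOn (scont.mono hIccsub)
    have hφ'cont : ContinuousOn (fun t => Real.sqrt (1 - k ^ 2 * (s t) ^ 2))
        (Set.uIcc (0:ℝ) t₀) := by
      rw [huIcc]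
      exact Real.continuous_sqrt.comp_continuousOn
        (continuousOn_const.sub (continuousOn_const.mul ((scont.mono hIccsub).pow 2)))
    have hφderiv : ∀ x ∈ Set.Ioo (min (0:ℝ) t₀) (max (0:ℝ) t₀),
        HasDerivWithinAt (fun t => Real.arcsin (s t))
          (Real.sqrt (1 - k ^ 2 * (s x) ^ 2)) (Set.Ioi x) x := by
      intro x hx
      rw [hmin, hmax] at hx
      have hxK : x ∈ Set.Icc (0:ℝ) K := hIccsub (Set.mem_Icc_of_Ioo hx)
      have hs0x : 0 ≤ s x := (sbound x hxK).1
      have hs1x : s x < 1 := hslt x hx.1.le hx.2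
      have hne1 : s x ≠ 1 := ne_of_lt hs1x
      have hnem1 : s x ≠ -1 := by linarith
      have hchain := (Real.hasDerivAt_arcsin hnem1 hne1).comp x (hs x hxK)
      have hsq : (0:ℝ) < 1 - (s x) ^ 2 := by nlinarith
      have heq : 1 / Real.sqrt (1 - (s x) ^ 2) *
          Real.sqrt ((1 - (s x) ^ 2) * (1 - k ^ 2 * (s x) ^ 2))
            = Real.sqrt (1 - k ^ 2 * (s x) ^ 2) := by
        rw [Real.sqrt_mul hsq.le]
        have : Real.sqrt (1 - (s x) ^ 2) ≠ 0 := ne_of_gt (Real.sqrt_pos.mpr hsq)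
        field_simp
      rw [heq] at hchain
      exact hchain.hasDerivWithinAt
    have := intervalIntegral.integral_comp_smul_deriv'' hφcont hφderiv hφ'cont
      (hg.continuousOn (s := (fun t => Real.arcsin (s t)) '' Set.uIcc (0:ℝ) t₀))
    simp only [smul_eq_mul, Function.comp] at this
    rw [this, hs0, hst₀, Real.arcsin_zero, Real.arcsin_one]
  -- first application: t₀ = K
  have ht₀K : t₀ = K := by
    have h1 := subst _ hg1cont
    have heq : ∀ t ∈ Set.Icc (0:ℝ) t₀,
        Real.sqrt (1 - k ^ 2 * (s t) ^ 2) *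
          (Real.sqrt (1 - k ^ 2 * Real.sin (Real.arcsin (s t)) ^ 2))⁻¹ = 1 := by
      intro t ht
      have htK := hIccsub ht
      have hb := sbound t htK
      rw [Real.sin_arcsin (by linarith [hb.1]) hb.2]
      exact mul_inv_cancel₀ (ne_of_gt (Real.sqrt_pos.mpr (hpos _ (by nlinarith [hb.1, hb.2]))))
    rw [intervalIntegral.integral_congr (g := fun _ => (1:ℝ)) (by rw [huIcc]; exact heq)] at h1
    simp only [intervalIntegral.integral_const, smul_eq_mul, sub_zero, mul_one] at h1
    rw [h1, ← hK]
  -- second application: ∫₀ᴷ (1 - k² s²) = E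
  have hEint : (∫ t in (0:ℝ)..K, (1 - k ^ 2 * (s t) ^ 2)) = E := by
    have h2 := subst _ hbase
    rw [ht₀K] at h2
    have heq : ∀ t ∈ Set.Icc (0:ℝ) K,
        Real.sqrt (1 - k ^ 2 * (s t) ^ 2) *
          Real.sqrt (1 - k ^ 2 * Real.sin (Real.arcsin (s t)) ^ 2)
            = 1 - k ^ 2 * (s t) ^ 2 := by
      intro t ht
      have hb := sbound t ht
      rw [Real.sin_arcsin (by linarith [hb.1]) hb.2]
      exact Real.mul_self_sqrt (hpos _ (by nlinarith [hb.1, hb.2])).le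
    rw [intervalIntegral.integral_congr (g := fun t => 1 - k ^ 2 * (s t) ^ 2)
      (by rw [Set.uIcc_of_le hK0.le]; exact heq)] at h2
    rw [h2, ← hE]
  -- now the main computation
  set f : ℝ → ℝ := fun u => y₃ - (y₃ - y₁) * (s u) ^ 2 with hf
  have scont2 : ContinuousOn s (Set.Icc K (2 * K)) := by
    have h : ContinuousOn (fun t => s (2 * K - t)) (Set.Icc K (2 * K)) := by
      apply scont.comp ((continuous_const.sub continuous_id).continuousOn)
      intro t ht
      exact ⟨by simp; linarith [ht.2], by simp; linarith [ht.1]⟩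
    simpa only [hsym] using h
  have hint1 : IntervalIntegrable f MeasureTheory.volume 0 K := by
    apply ContinuousOn.intervalIntegrable
    rw [Set.uIcc_of_le hK0.le]
    exact continuousOn_const.sub (continuousOn_const.mul (scont.pow 2))
  have hint2 : IntervalIntegrable f MeasureTheory.volume K (2 * K) := by
    apply ContinuousOn.intervalIntegrable
    rw [Set.uIcc_of_le (by linarith : K ≤ 2 * K)]
    exact continuousOn_const.sub (continuousOn_const.mul (scont2.pow 2))
  have hflip : (∫ u in K..(2 * K), f u) = ∫ u in (0:ℝ)..K, f u := by
    have h := intervalIntegral.integral_comp_sub_left (a := (0:ℝ)) (b := K) f (2 * K)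
    have h2K : 2 * K - K = K := by ring
    have h20 : 2 * K - 0 = 2 * K := by ring
    rw [h2K, h20] at h
    rw [← h]
    apply intervalIntegral.integral_congr
    intro x _
    simp only [hf, hsym]
  have hsplit : (∫ u in (0:ℝ)..(2 * K), f u) = 2 * ∫ u in (0:ℝ)..K, f u := by
    rw [← intervalIntegral.integral_add_adjacent_intervals hint1 hint2, hflip]
    ring
  have hmain : (∫ u in (0:ℝ)..K, f u) = y₂ * K + r ^ 2 * E := by
    have heq : ∀ u ∈ Set.Icc (0:ℝ) K,
        f u = y₂ + r ^ 2 * (1 - k ^ 2 * (s u) ^ 2) := by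
      intro u _
      simp only [hf]
      linear_combination (s u ^ 2) * hk2 - hr2
    rw [intervalIntegral.integral_congr (g := fun u => y₂ + r ^ 2 * (1 - k ^ 2 * (s u) ^ 2))
      (by rw [Set.uIcc_of_le hK0.le]; exact heq)]
    have hintg : IntervalIntegrable (fun u => 1 - k ^ 2 * (s u) ^ 2)
        MeasureTheory.volume 0 K := by
      apply ContinuousOn.intervalIntegrable
      rw [Set.uIcc_of_le hK0.le]
      exact continuousOn_const.sub (continuousOn_const.mul (scont.pow 2))
    rw [intervalIntegral.integral_add intervalIntegrable_const (hintg.const_mul _),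
      intervalIntegral.integral_const_mul, hEint]
    simp [mul_comm]
  have hcomp : (∫ t in (0:ℝ)..(2 * K / r), (y₃ - (y₃ - y₁) * (s (r * t)) ^ 2))
      = r⁻¹ * ∫ u in (0:ℝ)..(2 * K), f u := by
    have h := intervalIntegral.integral_comp_mul_left (a := (0:ℝ)) (b := 2 * K / r) f hrne
    simp only [hf] at h ⊢
    rw [h, mul_zero, mul_div_cancel₀ _ hrne, smul_eq_mul]
  rw [hcomp, hsplit, hmain]
  field_simp
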